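/- For odd n = 2k+1 with n ≥ 3, there exists a schedule of the single round-robin tournament on n teams with guaranteed rest time k-1, games-played difference index 1, and rest difference index 1. -/

import Mathlib

/-- `f` lists the games of a single round-robin tournament on `n` teams:
positions `0, ..., N-1` are in bijection with the unordered pairs of distinct teams. -/
def isSchedule (n N : ℕ) (f : ℕ → Sym2 (Fin n)) : Prop :=
  (∀ i, i < N → ¬ (f i).IsDiag) ∧
  ∀ p : Sym2 (Fin n), ¬ p.IsDiag → ∃! i, i < N ∧ f i = p

/-- The schedule has guaranteed rest time at least `b`: any two games involving a
common team `t` are separated by at least `b` games not involving `t`. -/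
def hasRest (n N : ℕ) (f : ℕ → Sym2 (Fin n)) (b : ℕ) : Prop :=
  ∀ t : Fin n, ∀ i j, i < j → j < N → t ∈ f i → t ∈ f j →
    b ≤ ((Finset.Ioo i j).filter (fun l => t ∉ f l)).card

/-- Number of games played by team `t` in the first `m` games. -/
def played (n : ℕ) (f : ℕ → Sym2 (Fin n)) (t : Fin n) (m : ℕ) : ℕ :=
  ((Finset.range m).filter (fun i => t ∈ f i)).card

/-- The games-played difference index is at most `p`. -/
def gpLe (n N : ℕ) (f : ℕ → Sym2 (Fin n)) (p : ℕ) : Prop :=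
  ∀ m, m ≤ N → ∀ t1 t2 : Fin n, played n f t1 m ≤ played n f t2 m + p

/-- The rest of team `t` going into the game at position `i`: the number of games since
`t`'s previous game, where all teams play an imaginary game one slot before game `0`. -/
def rest (n : ℕ) (f : ℕ → Sym2 (Fin n)) (t : Fin n) (i : ℕ) : ℕ :=
  ((Finset.range i).filter (fun j => ∀ l, j ≤ l → l < i → t ∉ f l)).card

/-- The rest difference index is at most `d`. -/
def rdLe (n N : ℕ) (f : ℕ → Sym2 (Fin n)) (d : ℕ) : Prop :=
  ∀ i, i < N → ∀ t1 t2 : Fin n, t1 ∈ f i → t2 ∈ f i →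
    rest n f t1 i ≤ rest n f t2 i + d

/-!
### Auxiliary construction

For `n = 2k+1`, we use a Walecki-type decomposition of `K_n` into `k` Hamiltonian
cycles.  The schedule consists of `k` blocks of `n` games; block `q` lists the edges of
the `q`-th Hamiltonian cycle `v_0, v_1, ..., v_{n-1}` in the order
`{v_{2s mod n}, v_{2s+1 mod n}}` for in-block slots `s = 0, ..., n-1`.
The vertex sequence of cycle `q` is `2k, q, q+1, q-1, q+2, q-2, ...` (mod `2k`).
Each team then plays exactly twice per block, at in-block slots `lo` and `hi` below,
with all gaps between consecutive games of a team equal to `k` or `k+1`.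
-/

namespace RRAux

/-- `cc k q t` is `(q - t) mod 2k` for a non-infinity team `t`. -/
def cc (k q t : ℕ) : ℕ := if t ≤ q then q - t else q + 2*k - t

/-- first in-block slot of team `t` in block `q`. -/
def lo (k q t : ℕ) : ℕ :=
  if t = 2*k then 0 else if cc k q t < k then cc k q t else 2*k - cc k q t

/-- second in-block slot of team `t` in block `q`. -/
def hi (k q t : ℕ) : ℕ :=
  if t = 2*k then k else if cc k q t < k then cc k q t + k + 1 else 3*k - cc k q t

/-- first team of the game at in-block slot `s` of block `q`. -/
def A (k q s : ℕ) : ℕ :=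
  if s = 0 then 2*k
  else if s < k then q + s
  else if s = k then q + k
  else if s ≤ q + k + 1 then q + k + 1 - s else q + 3*k + 1 - s

/-- second team of the game at in-block slot `s` of block `q`. -/
def B (k q s : ℕ) : ℕ :=
  if s = 0 then q
  else if s < k then (if s ≤ q then q - s else q + 2*k - s)
  else if s = k then 2*k
  else q + s - k

/-- the schedule. -/
def F (k i : ℕ) : Sym2 (Fin (2*k+1)) :=
  Sym2.mk ((⟨A k (i/(2*k+1)) (i%(2*k+1)) % (2*k+1), Nat.mod_lt _ (by omega)⟩ : Fin (2*k+1)))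
           (⟨B k (i/(2*k+1)) (i%(2*k+1)) % (2*k+1), Nat.mod_lt _ (by omega)⟩ : Fin (2*k+1))

lemma A_lt {k q s : ℕ} (hk : 1 ≤ k) (hq : q < k) (hs : s < 2*k+1) : A k q s < 2*k+1 := by
  unfold A; split_ifs <;> omega

lemma B_lt {k q s : ℕ} (hk : 1 ≤ k) (hq : q < k) (hs : s < 2*k+1) : B k q s < 2*k+1 := by
  unfold B; split_ifs <;> omega

lemma key {k q s t : ℕ} (hk : 1 ≤ k) (hq : q < k) (hs : s < 2*k+1) (ht : t < 2*k+1) :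
    (t = A k q s ∨ t = B k q s) ↔ (s = lo k q t ∨ s = hi k q t) := by
  unfold A B lo hi cc; split_ifs <;> omega

lemma lohi_bounds {k q t : ℕ} (hk : 1 ≤ k) (hq : q ≤ k) (ht : t < 2*k+1) :
    lo k q t ≤ k ∧ k ≤ hi k q t ∧ hi k q t ≤ 2*k ∧
      (hi k q t = lo k q t + k ∨ hi k q t = lo k q t + k + 1) := by
  unfold lo hi cc; split_ifs <;> omega

lemma cross {k q t : ℕ} (hk : 1 ≤ k) (hq : q + 1 < k) (ht : t < 2*k+1) :
    hi k q t + k ≤ (2*k+1) + lo k (q+1) t ∧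
      (2*k+1) + lo k (q+1) t ≤ hi k q t + k + 1 := by
  unfold lo hi cc; split_ifs <;> omega

lemma AB_ne {k q s : ℕ} (hk : 1 ≤ k) (hq : q < k) (hs : s < 2*k+1) : A k q s ≠ B k q s := by
  unfold A B; split_ifs <;> omega

lemma tm_inj {k q s q' s' : ℕ} (hk : 1 ≤ k) (hq : q < k) (hq' : q' < k)
    (hs : s < 2*k+1) (hs' : s' < 2*k+1)
    (h : (A k q s = A k q' s' ∧ B k q s = B k q' s') ∨
         (A k q s = B k q' s' ∧ B k q s = A k q' s')) : q = q' ∧ s = s' := by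
  unfold A B at h; rcases h with ⟨h1, h2⟩ | ⟨h1, h2⟩ <;> split_ifs at h1 h2 <;> omega

lemma div_lt {k i : ℕ} (h : i < (2*k+1)*k) : i / (2*k+1) < k := by
  rw [Nat.div_lt_iff_lt_mul (by omega), mul_comm]; exact h

lemma decomp {k : ℕ} (i : ℕ) : (i/(2*k+1))*(2*k+1) + i%(2*k+1) = i := by
  rw [mul_comm]; exact Nat.div_add_mod i (2*k+1)

lemma div_eq_of_between {k q l : ℕ} (h1 : q*(2*k+1) ≤ l) (h2 : l < q*(2*k+1) + (2*k+1)) :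
    l / (2*k+1) = q ∧ l % (2*k+1) = l - q*(2*k+1) := by
  have hx : (q+1)*(2*k+1) = q*(2*k+1) + (2*k+1) := by ring
  have hd : l / (2*k+1) = q := Nat.div_eq_of_lt_le h1 (by omega)
  have hl := decomp (k := k) l
  rw [hd] at hl
  exact ⟨hd, by omega⟩

lemma mem_F {k : ℕ} (hk : 1 ≤ k) (t : Fin (2*k+1)) {i : ℕ} (hiN : i < (2*k+1)*k) :
    t ∈ F k i ↔ (i % (2*k+1) = lo k (i/(2*k+1)) t.val ∨
                 i % (2*k+1) = hi k (i/(2*k+1)) t.val) := by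
  have hq : i / (2*k+1) < k := div_lt hiN
  have hs : i % (2*k+1) < 2*k+1 := Nat.mod_lt _ (by omega)
  have hA : A k (i/(2*k+1)) (i%(2*k+1)) % (2*k+1) = A k (i/(2*k+1)) (i%(2*k+1)) :=
    Nat.mod_eq_of_lt (A_lt hk hq hs)
  have hB : B k (i/(2*k+1)) (i%(2*k+1)) % (2*k+1) = B k (i/(2*k+1)) (i%(2*k+1)) :=
    Nat.mod_eq_of_lt (B_lt hk hq hs)
  rw [F, Sym2.mem_iff]
  rw [show ∀ a b : Fin (2*k+1), (t = a ∨ t = b) ↔ (t.val = a.val ∨ t.val = b.val) by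
    intro a b; rw [Fin.ext_iff, Fin.ext_iff]]
  simp only [hA, hB]
  exact key hk hq hs t.isLt

/-- membership at an explicitly given block/slot. -/
lemma mem_F' {k : ℕ} (hk : 1 ≤ k) (t : Fin (2*k+1)) {q s : ℕ} (hq : q < k) (hs : s < 2*k+1) :
    t ∈ F k (q*(2*k+1)+s) ↔ (s = lo k q t.val ∨ s = hi k q t.val) := by
  have h1 : (q*(2*k+1)+s) / (2*k+1) = q := by
    rw [add_comm, mul_comm, Nat.add_mul_div_left _ _ (by omega), Nat.div_eq_of_lt hs]; omega
  have h2 : (q*(2*k+1)+s) % (2*k+1) = s := by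
    rw [add_comm, mul_comm, Nat.add_mul_mod_self_left, Nat.mod_eq_of_lt hs]
  rw [mem_F hk t (by calc q*(2*k+1)+s < (q+1)*(2*k+1) := by ring_nf; omega
                        _ ≤ k * (2*k+1) := Nat.mul_le_mul_right _ (by omega)
                        _ = (2*k+1)*k := by ring), h1, h2]

lemma gap_lemma {k : ℕ} (hk : 1 ≤ k) (t : Fin (2*k+1)) {i j : ℕ} (hij : i < j)
    (hjN : j < (2*k+1)*k) (hti : t ∈ F k i) (htj : t ∈ F k j)
    (hbet : ∀ l, i < l → l < j → t ∉ F k l) : i + k ≤ j := by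
  have hiN : i < (2*k+1)*k := lt_trans hij hjN
  have hqk : i / (2*k+1) < k := div_lt hiN
  have hq'k : j / (2*k+1) < k := div_lt hjN
  have hsn : i % (2*k+1) < 2*k+1 := Nat.mod_lt _ (by omega)
  have hs'n : j % (2*k+1) < 2*k+1 := Nat.mod_lt _ (by omega)
  have hie := decomp (k := k) i
  have hje := decomp (k := k) j
  have hmi := (mem_F hk t hiN).mp hti
  have hmj := (mem_F hk t hjN).mp htj
  have hbi := lohi_bounds hk (le_of_lt hqk) t.isLt
  have hbj := lohi_bounds hk (le_of_lt hq'k) t.isLt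
  set q := i / (2*k+1) with hq
  set s := i % (2*k+1) with hs
  set q' := j / (2*k+1) with hq'
  set s' := j % (2*k+1) with hs'
  have hqq' : q ≤ q' := Nat.div_le_div_right (le_of_lt hij)
  rcases Nat.lt_or_ge q' (q+2) with hcase | hcase
  · rcases Nat.eq_or_lt_of_le hqq' with hqe | hqlt
    · -- q' = q
      rw [← hqe] at hje hmj hbj
      omega
    · -- q' = q + 1
      have hqe : q' = q + 1 := by omega
      have hq1k : q + 1 < k := by omega
      rw [hqe] at hje hmj hbj
      have hexp : (q+1)*(2*k+1) = q*(2*k+1) + (2*k+1) := by ring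
      have hs_hi : s = hi k q t.val := by
        rcases hmi with h | h
        · exfalso
          have hlt : lo k q t.val < hi k q t.val := by omega
          have hmem : t ∈ F k (q*(2*k+1) + hi k q t.val) :=
            (mem_F' hk t hqk (by omega)).mpr (Or.inr rfl)
          exact hbet _ (by omega) (by omega) hmem
        · exact h
      have hs'_lo : s' = lo k (q+1) t.val := by
        rcases hmj with h | h
        · exact h
        · exfalso
          have hlt : lo k (q+1) t.val < hi k (q+1) t.val := by omega
          have hmem : t ∈ F k ((q+1)*(2*k+1) + lo k (q+1) t.val) :=
            (mem_F' hk t hq1k (by omega)).mpr (Or.inl rfl)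
          exact hbet _ (by omega) (by omega) hmem
      have hcr := cross hk hq1k t.isLt
      omega
  · -- q' ≥ q + 2 : impossible
    exfalso
    have hq1k : q + 1 < k := by omega
    have hexp : (q+1)*(2*k+1) = q*(2*k+1) + (2*k+1) := by ring
    have hbig : (q+2)*(2*k+1) ≤ q'*(2*k+1) := Nat.mul_le_mul_right _ (by omega)
    have hexp2 : (q+2)*(2*k+1) = q*(2*k+1) + 2*(2*k+1) := by ring
    have hbj1 := lohi_bounds hk (le_of_lt hq1k) t.isLt
    have hmem : t ∈ F k ((q+1)*(2*k+1) + lo k (q+1) t.val) :=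
      (mem_F' hk t hq1k (by omega)).mpr (Or.inl rfl)
    exact hbet _ (by omega) (by omega) hmem

lemma hasRest_aux {k : ℕ} (hk : 1 ≤ k) (t : Fin (2*k+1)) :
    ∀ d i j, j - i ≤ d → i < j → j < (2*k+1)*k → t ∈ F k i → t ∈ F k j →
      k - 1 ≤ ((Finset.Ioo i j).filter (fun l => t ∉ F k l)).card := by
  intro d
  induction d with
  | zero => intro i j h1 h2 _ _ _; omega
  | succ d IH =>
    intro i j hd hij hjN hti htj
    by_cases hb : ∀ l, i < l → l < j → t ∉ F k l
    · have hgap := gap_lemma hk t hij hjN hti htj hb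
      have : (Finset.Ioo i j).filter (fun l => t ∉ F k l) = Finset.Ioo i j := by
        apply Finset.filter_true_of_mem
        intro x hx
        rw [Finset.mem_Ioo] at hx
        exact hb x hx.1 hx.2
      rw [this, Nat.card_Ioo]
      omega
    · push_neg at hb
      obtain ⟨l, hil, hlj, htl⟩ := hb
      have h1 := IH l j (by omega) hlj hjN htl htj
      refine le_trans h1 (Finset.card_le_card ?_)
      intro x hx
      simp only [Finset.mem_filter, Finset.mem_Ioo] at hx ⊢
      exact ⟨⟨by omega, hx.1.2⟩, hx.2⟩

lemma rest_of_prev {k : ℕ} (t : Fin (2*k+1)) {P i : ℕ} (hPi : P < i) (htP : t ∈ F k P)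
    (hbet : ∀ l, P < l → l < i → t ∉ F k l) :
    rest (2*k+1) (F k) t i = i - P - 1 := by
  unfold rest
  have heq : (Finset.range i).filter (fun j => ∀ l, j ≤ l → l < i → t ∉ F k l)
      = Finset.Ioo P i := by
    ext j
    simp only [Finset.mem_filter, Finset.mem_range, Finset.mem_Ioo]
    constructor
    · rintro ⟨hj, hall⟩
      refine ⟨?_, hj⟩
      by_contra h
      push_neg at h
      exact hall P h hPi htP
    · rintro ⟨hPj, hj⟩
      exact ⟨hj, fun l hjl hli => hbet l (by omega) hli⟩
  rw [heq, Nat.card_Ioo]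

lemma rest_of_first {k : ℕ} (t : Fin (2*k+1)) {i : ℕ} (h : ∀ l, l < i → t ∉ F k l) :
    rest (2*k+1) (F k) t i = i := by
  unfold rest
  rw [Finset.filter_true_of_mem, Finset.card_range]
  intro j hj
  rw [Finset.mem_range] at hj
  exact fun l _ hli => h l hli

lemma rest_range {k : ℕ} (hk : 1 ≤ k) {i : ℕ} (hiN : i < (2*k+1)*k) (t : Fin (2*k+1))
    (hti : t ∈ F k i) :
    (i < k ∧ rest (2*k+1) (F k) t i = i) ∨
      (k ≤ i ∧ k - 1 ≤ rest (2*k+1) (F k) t i ∧ rest (2*k+1) (F k) t i ≤ k) := by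
  have hqk : i / (2*k+1) < k := div_lt hiN
  have hsn : i % (2*k+1) < 2*k+1 := Nat.mod_lt _ (by omega)
  have hie := decomp (k := k) i
  have hmi := (mem_F hk t hiN).mp hti
  have hbi := lohi_bounds hk (le_of_lt hqk) t.isLt
  set q := i / (2*k+1) with hq
  set s := i % (2*k+1) with hs
  rcases hmi with hslo | hshi
  · -- first game of a block
    rcases Nat.eq_zero_or_pos q with hq0 | hqpos
    · -- very first game
      rw [hq0] at hie
      have hieq : i = s := by omega
      have hfirst : ∀ l, l < i → t ∉ F k l := by
        intro l hl htl
        have hlN : l < (2*k+1)*k := by omega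
        have hld : l / (2*k+1) = 0 := Nat.div_eq_of_lt (by omega)
        have hlm : l % (2*k+1) = l := Nat.mod_eq_of_lt (by omega)
        rw [mem_F hk t hlN, hld, hlm] at htl
        rw [← hq0] at htl
        omega
      have hrest := rest_of_first t hfirst
      rcases Nat.lt_or_ge i k with h | h
      · exact Or.inl ⟨h, hrest⟩
      · exact Or.inr ⟨h, by omega⟩
    · -- later block : previous game is in block q-1
      obtain ⟨r, hr⟩ : ∃ r, q = r + 1 := ⟨q - 1, by omega⟩
      have hrk : r < k := by omega
      have hexp : (r+1)*(2*k+1) = r*(2*k+1) + (2*k+1) := by ring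
      rw [hr] at hie
      rw [hexp] at hie
      rw [hr] at hslo
      have hbr := lohi_bounds hk (le_of_lt hrk) t.isLt
      have hbr1 := lohi_bounds hk (le_of_lt (show r+1 < k by omega)) (t := t.val) t.isLt
      have htP : t ∈ F k (r*(2*k+1) + hi k r t.val) :=
        (mem_F' hk t hrk (by omega)).mpr (Or.inr rfl)
      have hbet : ∀ l, r*(2*k+1) + hi k r t.val < l → l < i → t ∉ F k l := by
        intro l h1 h2 htl
        have hlN : l < (2*k+1)*k := by omega
        rcases Nat.lt_or_ge l (r*(2*k+1) + (2*k+1)) with hc | hc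
        · have hd := div_eq_of_between (k := k) (q := r) (l := l) (by omega) (by omega)
          rw [mem_F hk t hlN, hd.1, hd.2] at htl
          omega
        · have hd := div_eq_of_between (k := k) (q := r+1) (l := l) (by rw [hexp]; omega)
            (by rw [hexp]; omega)
          rw [mem_F hk t hlN, hd.1, hd.2, hexp] at htl
          omega
      have hrest := rest_of_prev t (by omega) htP hbet
      have hcr := cross (q := r) hk (by omega) t.isLt
      exact Or.inr ⟨by omega, by omega, by omega⟩
  · -- second game of block q : previous game at q*(2k+1) + lo
    have htP : t ∈ F k (q*(2*k+1) + lo k q t.val) :=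
      (mem_F' hk t hqk (by omega)).mpr (Or.inl rfl)
    have hbet : ∀ l, q*(2*k+1) + lo k q t.val < l → l < i → t ∉ F k l := by
      intro l h1 h2 htl
      have hlN : l < (2*k+1)*k := by omega
      have hd := div_eq_of_between (k := k) (q := q) (l := l) (by omega) (by omega)
      rw [mem_F hk t hlN, hd.1, hd.2] at htl
      omega
    have hrest := rest_of_prev t (by omega) htP hbet
    exact Or.inr ⟨by omega, by omega, by omega⟩

lemma rdLe_one {k : ℕ} (hk : 1 ≤ k) : rdLe (2*k+1) ((2*k+1)*k) (F k) 1 := by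
  intro i hiN t1 t2 h1 h2
  rcases rest_range hk hiN t1 h1 with ⟨ha, hb⟩ | ⟨ha, hb, hc⟩ <;>
    rcases rest_range hk hiN t2 h2 with ⟨hd, he⟩ | ⟨hd, he, hf⟩ <;> omega

lemma lo_zero_k {k : ℕ} (hk : 1 ≤ k) : lo k 0 k = k ∧ hi k 0 k = 2*k := by
  unfold lo hi cc; split_ifs <;> omega

lemma lo_zero_top {k : ℕ} (hk : 1 ≤ k) : lo k 0 (2*k) = 0 ∧ hi k 0 (2*k) = k := by
  unfold lo hi cc; split_ifs <;> omega

lemma not_rdLe_zero {k : ℕ} (hk : 1 ≤ k) : ¬ rdLe (2*k+1) ((2*k+1)*k) (F k) 0 := by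
  intro h
  have h3k : 3*k ≤ (2*k+1)*k := Nat.mul_le_mul_right _ (by omega)
  have hkN : k < (2*k+1)*k := by omega
  set t1 : Fin (2*k+1) := ⟨k, by omega⟩
  set t2 : Fin (2*k+1) := ⟨2*k, by omega⟩
  have e1 := lo_zero_k hk
  have e2 := lo_zero_top hk
  have hm1 : t1 ∈ F k k := by
    have := (mem_F' hk t1 (q := 0) (s := k) hk (by omega))
    simp only [zero_mul, zero_add] at this
    exact this.mpr (Or.inl e1.1.symm)
  have hm2 : t2 ∈ F k k := by
    have := (mem_F' hk t2 (q := 0) (s := k) hk (by omega))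
    simp only [zero_mul, zero_add] at this
    exact this.mpr (Or.inr e2.2.symm)
  have hr1 : rest (2*k+1) (F k) t1 k = k := by
    apply rest_of_first
    intro l hl htl
    have hlN : l < (2*k+1)*k := by omega
    have hld : l / (2*k+1) = 0 := Nat.div_eq_of_lt (by omega)
    have hlm : l % (2*k+1) = l := Nat.mod_eq_of_lt (by omega)
    rw [mem_F hk t1 hlN, hld, hlm] at htl
    simp only [t1] at htl
    omega
  have hm0 : t2 ∈ F k 0 := by
    have := (mem_F' hk t2 (q := 0) (s := 0) hk (by omega))
    simp only [zero_mul, zero_add] at this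
    exact this.mpr (Or.inl e2.1.symm)
  have hr2 : rest (2*k+1) (F k) t2 k = k - 1 := by
    have := rest_of_prev t2 (P := 0) (i := k) (by omega) hm0 ?_
    · omega
    · intro l h1 h2 htl
      have hlN : l < (2*k+1)*k := by omega
      have hld : l / (2*k+1) = 0 := Nat.div_eq_of_lt (by omega)
      have hlm : l % (2*k+1) = l := Nat.mod_eq_of_lt (by omega)
      rw [mem_F hk t2 hlN, hld, hlm] at htl
      simp only [t2] at htl
      omega
  have := h k hkN t1 t2 hm1 hm2
  omega

lemma played_step {k : ℕ} (t : Fin (2*k+1)) (m : ℕ) :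
    played (2*k+1) (F k) t (m+1) =
      played (2*k+1) (F k) t m + (if t ∈ F k m then 1 else 0) := by
  rw [played, played, Finset.range_add_one, Finset.filter_insert]
  split_ifs with h
  · rw [Finset.card_insert_of_notMem (by simp)]
  · rfl

lemma played_formula {k : ℕ} (hk : 1 ≤ k) (t : Fin (2*k+1)) :
    ∀ m, m ≤ (2*k+1)*k → played (2*k+1) (F k) t m =
      2*(m/(2*k+1)) + (if m % (2*k+1) ≤ lo k (m/(2*k+1)) t.val then 0
        else if m % (2*k+1) ≤ hi k (m/(2*k+1)) t.val then 1 else 2) := by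
  intro m
  induction m with
  | zero =>
    intro _
    simp [played, Nat.zero_div, Nat.zero_mod]
  | succ m ih =>
    intro hm
    have hmN : m < (2*k+1)*k := by omega
    have hqk : m / (2*k+1) < k := div_lt hmN
    have hsn : m % (2*k+1) < 2*k+1 := Nat.mod_lt _ (by omega)
    have hie := decomp (k := k) m
    have hbq := lohi_bounds (q := m/(2*k+1)) hk (le_of_lt hqk) t.isLt
    have hmem := mem_F hk t hmN
    rw [played_step, ih (by omega)]
    set q := m / (2*k+1) with hq
    set s := m % (2*k+1) with hs
    rcases Nat.lt_or_ge s (2*k) with hcase | hcase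
    · -- (m+1)/n = q, (m+1)%n = s+1
      have hd := div_eq_of_between (k := k) (q := q) (l := m+1) (by omega) (by omega)
      rw [hd.1, hd.2]
      by_cases hmm : t ∈ F k m
      · have := hmem.mp hmm
        rw [if_pos hmm]
        split_ifs <;> omega
      · have : ¬ (s = lo k q t.val ∨ s = hi k q t.val) := fun hc => hmm (hmem.mpr hc)
        rw [if_neg hmm]
        split_ifs <;> omega
    · -- s = 2k : rollover
      have hs2k : s = 2*k := by omega
      have hexp : (q+1)*(2*k+1) = q*(2*k+1) + (2*k+1) := by ring
      have hd := div_eq_of_between (k := k) (q := q+1) (l := m+1) (by omega) (by omega)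
      rw [hd.1, hd.2]
      have hbq1 := lohi_bounds (q := q+1) (t := t.val) hk (by omega) t.isLt
      by_cases hmm : t ∈ F k m
      · have := hmem.mp hmm
        rw [if_pos hmm]
        split_ifs <;> omega
      · have : ¬ (s = lo k q t.val ∨ s = hi k q t.val) := fun hc => hmm (hmem.mpr hc)
        rw [if_neg hmm]
        split_ifs <;> omega

lemma gpLe_one {k : ℕ} (hk : 1 ≤ k) : gpLe (2*k+1) ((2*k+1)*k) (F k) 1 := by
  intro m hm t1 t2
  have hqle : m / (2*k+1) ≤ k := by
    have h := Nat.div_le_div_right (c := 2*k+1) hm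
    rwa [Nat.mul_div_cancel_left _ (by omega)] at h
  have hb1 := lohi_bounds (q := m/(2*k+1)) hk hqle t1.isLt
  have hb2 := lohi_bounds (q := m/(2*k+1)) hk hqle t2.isLt
  rw [played_formula hk t1 m hm, played_formula hk t2 m hm]
  split_ifs <;> omega

lemma lohi_zero_zero {k : ℕ} (hk : 1 ≤ k) :
    lo k 0 0 = 0 ∧ (lo k 0 1 = 2*k - (2*k-1) ∧ hi k 0 1 = 3*k - (2*k-1)) := by
  unfold lo hi cc; split_ifs <;> omega

lemma not_gpLe_zero {k : ℕ} (hk : 1 ≤ k) : ¬ gpLe (2*k+1) ((2*k+1)*k) (F k) 0 := by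
  intro h
  have h3k : 3*k ≤ (2*k+1)*k := Nat.mul_le_mul_right _ (by omega)
  set t1 : Fin (2*k+1) := ⟨0, by omega⟩
  set t2 : Fin (2*k+1) := ⟨1, by omega⟩
  have hz := lohi_zero_zero hk
  have hm1 : t1 ∈ F k 0 := by
    have := (mem_F' hk t1 (q := 0) (s := 0) hk (by omega))
    simp only [zero_mul, zero_add] at this
    exact this.mpr (Or.inl hz.1.symm)
  have hm2 : t2 ∉ F k 0 := by
    have := (mem_F' hk t2 (q := 0) (s := 0) hk (by omega))
    simp only [zero_mul, zero_add] at this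
    intro hc
    have := this.mp hc
    simp only [t2] at this
    omega
  have hz1 : played (2*k+1) (F k) t1 0 = 0 := by simp [played]
  have hz2 : played (2*k+1) (F k) t2 0 = 0 := by simp [played]
  have hp1 : played (2*k+1) (F k) t1 1 = 1 := by
    have hstep := played_step t1 0
    rw [if_pos hm1] at hstep
    norm_num at hstep
    omega
  have hp2 : played (2*k+1) (F k) t2 1 = 0 := by
    have hstep := played_step t2 0
    rw [if_neg hm2] at hstep
    norm_num at hstep
    omega
  have := h 1 (by omega) t1 t2
  omega

lemma F_not_diag {k : ℕ} (hk : 1 ≤ k) {i : ℕ} (hiN : i < (2*k+1)*k) :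
    ¬ (F k i).IsDiag := by
  have hqk : i / (2*k+1) < k := div_lt hiN
  have hsn : i % (2*k+1) < 2*k+1 := Nat.mod_lt _ (by omega)
  rw [F, Sym2.mk_isDiag_iff]
  intro h
  rw [Fin.mk.injEq, Nat.mod_eq_of_lt (A_lt hk hqk hsn), Nat.mod_eq_of_lt (B_lt hk hqk hsn)] at h
  exact AB_ne hk hqk hsn h

lemma F_inj {k : ℕ} (hk : 1 ≤ k) {i j : ℕ} (hiN : i < (2*k+1)*k) (hjN : j < (2*k+1)*k)
    (h : F k i = F k j) : i = j := by
  have hqi : i / (2*k+1) < k := div_lt hiN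
  have hqj : j / (2*k+1) < k := div_lt hjN
  have hsi : i % (2*k+1) < 2*k+1 := Nat.mod_lt _ (by omega)
  have hsj : j % (2*k+1) < 2*k+1 := Nat.mod_lt _ (by omega)
  rw [F, F, Sym2.eq_iff] at h
  simp only [Fin.mk.injEq, Nat.mod_eq_of_lt (A_lt hk hqi hsi), Nat.mod_eq_of_lt (B_lt hk hqi hsi),
    Nat.mod_eq_of_lt (A_lt hk hqj hsj), Nat.mod_eq_of_lt (B_lt hk hqj hsj)] at h
  obtain ⟨hq, hs⟩ := tm_inj hk hqi hqj hsi hsj h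
  rw [← decomp (k := k) i, ← decomp (k := k) j, hq, hs]

lemma F_schedule {k : ℕ} (hk : 1 ≤ k) : isSchedule (2*k+1) ((2*k+1)*k) (F k) := by
  constructor
  · exact fun i hiN => F_not_diag hk hiN
  · intro p hp
    let φ : Fin ((2*k+1)*k) → {p : Sym2 (Fin (2*k+1)) // ¬ p.IsDiag} :=
      fun i => ⟨F k i.val, F_not_diag hk i.isLt⟩
    have hinj : Function.Injective φ := by
      intro a b hab
      exact Fin.ext (F_inj hk a.isLt b.isLt (congrArg Subtype.val hab))
    have hcard : Fintype.card (Fin ((2*k+1)*k))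
        = Fintype.card {p : Sym2 (Fin (2*k+1)) // ¬ p.IsDiag} := by
      rw [Fintype.card_fin, Sym2.card_subtype_not_diag, Fintype.card_fin, Nat.choose_two_right]
      rw [show (2*k+1-1) = 2*k by omega]
      rw [show (2*k+1)*(2*k) = ((2*k+1)*k)*2 by ring, Nat.mul_div_cancel _ (by omega)]
    have hbij := (Fintype.bijective_iff_injective_and_card φ).mpr ⟨hinj, hcard⟩
    obtain ⟨i, hi⟩ := hbij.2 ⟨p, hp⟩
    refine ⟨i.val, ⟨i.isLt, congrArg Subtype.val hi⟩, ?_⟩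
    rintro y ⟨hy1, hy2⟩
    exact F_inj hk hy1 i.isLt (hy2.trans (congrArg Subtype.val hi).symm)

end RRAux

/-- For odd `n = 2k+1 ≥ 3`, there exists a schedule with guaranteed rest time `k-1`,
games-played difference index exactly `1`, and rest difference index exactly `1`. -/
theorem stmt15 (k : ℕ) (hk : 1 ≤ k) :
    ∃ f : ℕ → Sym2 (Fin (2*k+1)), isSchedule (2*k+1) ((2*k+1)*(2*k)/2) f ∧
      hasRest (2*k+1) ((2*k+1)*(2*k)/2) f (k-1) ∧
      (gpLe (2*k+1) ((2*k+1)*(2*k)/2) f 1 ∧ ¬ gpLe (2*k+1) ((2*k+1)*(2*k)/2) f 0) ∧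
      (rdLe (2*k+1) ((2*k+1)*(2*k)/2) f 1 ∧ ¬ rdLe (2*k+1) ((2*k+1)*(2*k)/2) f 0) := by
  have hN : (2*k+1)*(2*k)/2 = (2*k+1)*k := by
    rw [show (2*k+1)*(2*k) = ((2*k+1)*k)*2 by ring, Nat.mul_div_cancel _ (by omega)]
  rw [hN]
  refine ⟨RRAux.F k, RRAux.F_schedule hk, ?_, ⟨RRAux.gpLe_one hk, RRAux.not_gpLe_zero hk⟩,
    RRAux.rdLe_one hk, RRAux.not_rdLe_zero hk⟩
  intro t i j hij hjN hti htj
  exact RRAux.hasRest_aux hk t (j-i) i j le_rfl hij hjN hti htj
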